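/- The set {a·cos + b·sin + c·1 : c > √(a² + b²)} ∪ {0} of functions in C[0, 2π] is exactly the image under S of the cone of nonnegative continuous functions, where S is the integral operator with kernel 1 + cos(s − t); consequently, S(C[0,2π]₊) is dense in (ran S) ∩ C[0,2π]₊ but not equal to it. -/

import Mathlib

open Set MeasureTheory intervalIntegral Real

noncomputable def II (n : ℕ) : ℝ := ∫ u in (0:ℝ)..2*π, (1 + Real.cos u)^n

lemma II_zero : II 0 = 2*π := by simp [II]

lemma deriv_aux (n : ℕ) (u : ℝ) :
    HasDerivAt (fun u => (1 + Real.cos u)^n * Real.sin u)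
      (((n:ℝ)+1) * (1 + Real.cos u)^(n+1) - (2*(n:ℝ)+1) * (1 + Real.cos u)^n) u := by
  have h1 : HasDerivAt (fun u => (1 + Real.cos u)) (-Real.sin u) u := by
    simpa using (Real.hasDerivAt_cos u).const_add 1
  have h2 : HasDerivAt (fun u => (1 + Real.cos u)^n * Real.sin u) _ u := (h1.fun_pow n).fun_mul (Real.hasDerivAt_sin u)
  convert h2 using 1
  rcases n with _ | m
  · simp
  · simp only [Nat.add_sub_cancel]
    push_cast
    rw [pow_succ, pow_succ]
    linear_combination ((m:ℝ)+1)*(1+Real.cos u)^m * (Real.sin_sq_add_cos_sq u)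

lemma II_rec (n : ℕ) : ((n:ℝ)+1) * II (n+1) = (2*(n:ℝ)+1) * II n := by
  have hc : ∀ m : ℕ, Continuous (fun u => (1 + Real.cos u)^m) := fun m => by fun_prop
  have key : (∫ u in (0:ℝ)..2*π,
      (((n:ℝ)+1) * (1 + Real.cos u)^(n+1) - (2*(n:ℝ)+1) * (1 + Real.cos u)^n)) = 0 := by
    rw [intervalIntegral.integral_eq_sub_of_hasDerivAt (fun u _ => deriv_aux n u)
      (Continuous.intervalIntegrable (by fun_prop) _ _)]
    simp
  rw [intervalIntegral.integral_sub ((continuous_const.fun_mul (hc (n+1))).intervalIntegrable _ _)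
      ((continuous_const.fun_mul (hc n)).intervalIntegrable _ _),
    intervalIntegral.integral_const_mul, intervalIntegral.integral_const_mul] at key
  simp only [II]
  linarith

lemma II_pos (n : ℕ) : 0 < II n := by
  induction n with
  | zero => rw [II_zero]; positivity
  | succ m ih =>
      have h := II_rec m
      have h1 : (0:ℝ) < (m:ℝ)+1 := by positivity
      nlinarith

lemma K_zero (n : ℕ) : (∫ u in (0:ℝ)..2*π, (1 + Real.cos u)^n * Real.sin u) = 0 := by
  have hd : ∀ u : ℝ, HasDerivAt (fun u => -(1 + Real.cos u)^(n+1) / ((n:ℝ)+1))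
      ((1 + Real.cos u)^n * Real.sin u) u := by
    intro u
    have h1 : HasDerivAt (fun u => (1 + Real.cos u)) (-Real.sin u) u := by
      simpa using (Real.hasDerivAt_cos u).const_add 1
    have h2 : HasDerivAt (fun u => -(1 + Real.cos u)^(n+1) / ((n:ℝ)+1)) _ u := ((h1.fun_pow (n+1)).fun_neg).div_const ((n:ℝ)+1)
    convert h2 using 1
    simp only [Nat.add_sub_cancel]
    push_cast
    field_simp
  rw [intervalIntegral.integral_eq_sub_of_hasDerivAt (fun u _ => hd u)
      (Continuous.intervalIntegrable (by fun_prop) _ _)]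
  simp

lemma expand (f : ℝ → ℝ) (hf : ContinuousOn f (Icc 0 (2*π))) (s : ℝ) :
    (∫ t in (0:ℝ)..2*π, f t * (1 + Real.cos (s - t)))
      = (∫ t in (0:ℝ)..2*π, f t)
        + Real.cos s * (∫ t in (0:ℝ)..2*π, f t * Real.cos t)
        + Real.sin s * (∫ t in (0:ℝ)..2*π, f t * Real.sin t) := by
  have hab : (0:ℝ) ≤ 2*π := by positivity
  have h1 : IntervalIntegrable f volume 0 (2*π) := hf.intervalIntegrable_of_Icc hab
  have h2 : IntervalIntegrable (fun t => Real.cos s * (f t * Real.cos t)) volume 0 (2*π) :=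
    ((continuousOn_const.mul (hf.mul Real.continuous_cos.continuousOn)).intervalIntegrable_of_Icc hab)
  have h3 : IntervalIntegrable (fun t => Real.sin s * (f t * Real.sin t)) volume 0 (2*π) :=
    ((continuousOn_const.mul (hf.mul Real.continuous_sin.continuousOn)).intervalIntegrable_of_Icc hab)
  have he : (∫ t in (0:ℝ)..2*π, f t * (1 + Real.cos (s - t)))
      = ∫ t in (0:ℝ)..2*π, (f t + (Real.cos s * (f t * Real.cos t) + Real.sin s * (f t * Real.sin t))) := by
    apply intervalIntegral.integral_congr
    intro t _
    simp only [Real.cos_sub]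
    ring
  rw [he, intervalIntegral.integral_add h1 (h2.add h3), intervalIntegral.integral_add h2 h3,
    intervalIntegral.integral_const_mul, intervalIntegral.integral_const_mul]
  ring

lemma shift (G : ℝ → ℝ) (hper : Function.Periodic G (2*π)) (φ : ℝ) :
    (∫ t in (0:ℝ)..2*π, G (t - φ)) = ∫ u in (0:ℝ)..2*π, G u := by
  rw [intervalIntegral.integral_comp_sub_right G φ]
  rw [show 2*π - φ = 0 - φ + 2*π by ring]
  simpa using hper.intervalIntegral_add_eq (0-φ) 0

lemma shift_pow (n : ℕ) (φ : ℝ) :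
    (∫ t in (0:ℝ)..2*π, (1 + Real.cos (t - φ))^n) = II n :=
  shift (fun u => (1 + Real.cos u)^n) (fun u => by simp [Real.cos_add_two_pi]) φ

lemma J_eq (n : ℕ) : (∫ u in (0:ℝ)..2*π, (1 + Real.cos u)^n * Real.cos u) = II (n+1) - II n := by
  have hc : ∀ m : ℕ, Continuous (fun u : ℝ => (1 + Real.cos u)^m) := fun m => by fun_prop
  have he : (∫ u in (0:ℝ)..2*π, (1 + Real.cos u)^n * Real.cos u)
      = ∫ u in (0:ℝ)..2*π, ((1 + Real.cos u)^(n+1) - (1 + Real.cos u)^n) := by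
    apply intervalIntegral.integral_congr
    intro u _
    simp only [pow_succ]
    ring
  rw [he, intervalIntegral.integral_sub ((hc (n+1)).intervalIntegrable _ _)
    ((hc n).intervalIntegrable _ _)]
  rfl

lemma shift_pow_cos (n : ℕ) (φ : ℝ) :
    (∫ t in (0:ℝ)..2*π, (1 + Real.cos (t - φ))^n * Real.cos t)
      = Real.cos φ * (II (n+1) - II n) := by
  have h0 : (∫ t in (0:ℝ)..2*π, (1 + Real.cos (t - φ))^n * Real.cos t)
      = ∫ t in (0:ℝ)..2*π, (fun u => (1 + Real.cos u)^n * Real.cos (u + φ)) (t - φ) := by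
    apply intervalIntegral.integral_congr
    intro t _
    simp [sub_add_cancel]
  have h1 := shift (fun u => (1 + Real.cos u)^n * Real.cos (u + φ)) (fun u => by
    simp only []
    rw [Real.cos_add_two_pi, show u + 2*π + φ = (u + φ) + 2*π by ring, Real.cos_add_two_pi]) φ
  rw [h0, h1]
  have he : (∫ u in (0:ℝ)..2*π, (1 + Real.cos u)^n * Real.cos (u + φ))
      = ∫ u in (0:ℝ)..2*π, (Real.cos φ * ((1 + Real.cos u)^n * Real.cos u)
          - Real.sin φ * ((1 + Real.cos u)^n * Real.sin u)) := by
    apply intervalIntegral.integral_congr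
    intro u _
    simp only [Real.cos_add]
    ring
  rw [he, intervalIntegral.integral_sub (Continuous.intervalIntegrable (by fun_prop) _ _)
      (Continuous.intervalIntegrable (by fun_prop) _ _),
    intervalIntegral.integral_const_mul, intervalIntegral.integral_const_mul, J_eq, K_zero]
  ring

lemma shift_pow_sin (n : ℕ) (φ : ℝ) :
    (∫ t in (0:ℝ)..2*π, (1 + Real.cos (t - φ))^n * Real.sin t)
      = Real.sin φ * (II (n+1) - II n) := by
  have h0 : (∫ t in (0:ℝ)..2*π, (1 + Real.cos (t - φ))^n * Real.sin t)
      = ∫ t in (0:ℝ)..2*π, (fun u => (1 + Real.cos u)^n * Real.sin (u + φ)) (t - φ) := by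
    apply intervalIntegral.integral_congr
    intro t _
    simp [sub_add_cancel]
  have h1 := shift (fun u => (1 + Real.cos u)^n * Real.sin (u + φ)) (fun u => by
    simp only []
    rw [Real.cos_add_two_pi, show u + 2*π + φ = (u + φ) + 2*π by ring, Real.sin_add_two_pi]) φ
  rw [h0, h1]
  have he : (∫ u in (0:ℝ)..2*π, (1 + Real.cos u)^n * Real.sin (u + φ))
      = ∫ u in (0:ℝ)..2*π, (Real.sin φ * ((1 + Real.cos u)^n * Real.cos u)
          + Real.cos φ * ((1 + Real.cos u)^n * Real.sin u)) := by
    apply intervalIntegral.integral_congr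
    intro u _
    simp only [Real.sin_add]
    ring
  rw [he, intervalIntegral.integral_add (Continuous.intervalIntegrable (by fun_prop) _ _)
      (Continuous.intervalIntegrable (by fun_prop) _ _),
    intervalIntegral.integral_const_mul, intervalIntegral.integral_const_mul, J_eq, K_zero]
  ring

lemma int_cos' : (∫ t in (0:ℝ)..2*π, Real.cos t) = 0 := by
  simp [integral_cos, Real.sin_two_pi]

lemma int_sin' : (∫ t in (0:ℝ)..2*π, Real.sin t) = 0 := by
  simp [integral_sin, Real.cos_two_pi]

lemma mem_image (a b c : ℝ) (h : Real.sqrt (a^2+b^2) < c) :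
    ∃ f : ℝ → ℝ, ContinuousOn f (Icc 0 (2*π)) ∧ (∀ t ∈ Icc (0:ℝ) (2*π), 0 ≤ f t) ∧
      (fun s => a * Real.cos s + b * Real.sin s + c)
        = fun s => ∫ t in (0:ℝ)..2*π, f t * (1 + Real.cos (s - t)) := by
  have hπ : (0:ℝ) < 2*π := by positivity
  set ρ := Real.sqrt (a^2+b^2) with hρdef
  have hρ0 : 0 ≤ ρ := Real.sqrt_nonneg _
  have hc : 0 < c := lt_of_le_of_lt hρ0 h
  set z : ℂ := ⟨a, b⟩ with hz
  have habs : ‖z‖ = ρ := by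
    rw [Complex.norm_def, hρdef]
    congr 1
    simp [Complex.normSq_mk, hz]
    ring
  set φ := Complex.arg z with hφ
  have ha : ρ * Real.cos φ = a := by rw [← habs]; exact Complex.norm_mul_cos_arg z
  have hb : ρ * Real.sin φ = b := by rw [← habs]; exact Complex.norm_mul_sin_arg z
  obtain ⟨m, hm⟩ := exists_nat_ge (ρ / (c - ρ))
  set n : ℕ := m + 1 with hn
  have hnpos : (0:ℝ) < (n:ℝ) := by exact_mod_cast Nat.succ_pos m
  have h2 : (0:ℝ) < (n:ℝ)+1 := by linarith
  have hcond : ρ * ((n:ℝ)+1) ≤ c * n := by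
    rw [div_le_iff₀ (by linarith : (0:ℝ) < c - ρ)] at hm
    have hmn : (m:ℝ) ≤ (n:ℝ) := by rw [hn]; push_cast; linarith
    nlinarith
  set J := II (n+1) - II n with hJ
  have hrec := II_rec n
  have hJn : ((n:ℝ)+1) * J = (n:ℝ) * II n := by rw [hJ]; linear_combination hrec
  have hJpos : 0 < J := by nlinarith [II_pos n]
  set lam := ρ / J with hlam
  have hlam0 : 0 ≤ lam := div_nonneg hρ0 hJpos.le
  have hkey2 : ρ * II n ≤ c * J := by
    have h3 := mul_le_mul_of_nonneg_right hcond (II_pos n).le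
    have : ((n:ℝ)+1) * (ρ * II n) ≤ ((n:ℝ)+1) * (c * J) := by
      calc ((n:ℝ)+1) * (ρ * II n) = ρ*((n:ℝ)+1) * II n := by ring
        _ ≤ c*(n:ℝ) * II n := h3
        _ = c * ((n:ℝ) * II n) := by ring
        _ = c * (((n:ℝ)+1) * J) := by rw [hJn]
        _ = ((n:ℝ)+1) * (c * J) := by ring
    exact le_of_mul_le_mul_left this h2
  have hlamII : lam * II n ≤ c := by
    rw [hlam, div_mul_eq_mul_div, div_le_iff₀ hJpos]
    linarith
  set μ := (c - lam * II n) / (2*π) with hμ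
  have hμ0 : 0 ≤ μ := div_nonneg (by linarith) hπ.le
  set f : ℝ → ℝ := fun t => lam * (1 + Real.cos (t - φ))^n + μ with hf
  have hfc : Continuous f := by rw [hf]; fun_prop
  have hfcont : ContinuousOn f (Icc 0 (2*π)) := hfc.continuousOn
  refine ⟨f, hfcont, ?_, ?_⟩
  · intro t _
    have h4 : (0:ℝ) ≤ 1 + Real.cos (t - φ) := by linarith [Real.neg_one_le_cos (t - φ)]
    exact add_nonneg (mul_nonneg hlam0 (pow_nonneg h4 n)) hμ0
  · have hGint : IntervalIntegrable (fun t => lam * (1 + Real.cos (t - φ))^n) volume 0 (2*π) :=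
      Continuous.intervalIntegrable (by fun_prop) _ _
    have I1 : (∫ t in (0:ℝ)..2*π, f t) = c := by
      rw [hf]
      rw [intervalIntegral.integral_add hGint (intervalIntegrable_const),
        intervalIntegral.integral_const_mul, shift_pow, intervalIntegral.integral_const]
      rw [hμ]
      rw [sub_zero, smul_eq_mul]
      field_simp
      ring
    have I2 : (∫ t in (0:ℝ)..2*π, f t * Real.cos t) = a := by
      have he : (∫ t in (0:ℝ)..2*π, f t * Real.cos t)
          = ∫ t in (0:ℝ)..2*π, (lam * ((1 + Real.cos (t - φ))^n * Real.cos t) + μ * Real.cos t) := by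
        apply intervalIntegral.integral_congr
        intro t _
        rw [hf]
        ring
      rw [he, intervalIntegral.integral_add (Continuous.intervalIntegrable (by fun_prop) _ _)
          (Continuous.intervalIntegrable (by fun_prop) _ _),
        intervalIntegral.integral_const_mul, intervalIntegral.integral_const_mul,
        shift_pow_cos, int_cos', ← hJ]
      rw [hlam]
      field_simp
      linear_combination ha
    have I3 : (∫ t in (0:ℝ)..2*π, f t * Real.sin t) = b := by
      have he : (∫ t in (0:ℝ)..2*π, f t * Real.sin t)
          = ∫ t in (0:ℝ)..2*π, (lam * ((1 + Real.cos (t - φ))^n * Real.sin t) + μ * Real.sin t) := by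
        apply intervalIntegral.integral_congr
        intro t _
        rw [hf]
        ring
      rw [he, intervalIntegral.integral_add (Continuous.intervalIntegrable (by fun_prop) _ _)
          (Continuous.intervalIntegrable (by fun_prop) _ _),
        intervalIntegral.integral_const_mul, intervalIntegral.integral_const_mul,
        shift_pow_sin, int_sin', ← hJ]
      rw [hlam]
      field_simp
      linear_combination hb
    funext s
    rw [expand f hfcont s, I1, I2, I3]
    ring

lemma forward (f : ℝ → ℝ) (hf : ContinuousOn f (Icc 0 (2*π)))
    (hpos : ∀ t ∈ Icc (0:ℝ) (2*π), 0 ≤ f t) :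
    (∃ a b c : ℝ, Real.sqrt (a^2+b^2) < c ∧
      (fun s => ∫ t in (0:ℝ)..2*π, f t * (1 + Real.cos (s - t)))
        = fun s => a * Real.cos s + b * Real.sin s + c)
    ∨ (fun s => ∫ t in (0:ℝ)..2*π, f t * (1 + Real.cos (s - t))) = (fun _ => (0:ℝ)) := by
  have hab : (0:ℝ) ≤ 2*π := by positivity
  have hablt : (0:ℝ) < 2*π := by positivity
  set a := ∫ t in (0:ℝ)..2*π, f t * Real.cos t with hadef
  set b := ∫ t in (0:ℝ)..2*π, f t * Real.sin t with hbdef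
  set c := ∫ t in (0:ℝ)..2*π, f t with hcdef
  have hfi : IntervalIntegrable f volume 0 (2*π) := hf.intervalIntegrable_of_Icc hab
  have hfci : IntervalIntegrable (fun t => f t * Real.cos t) volume 0 (2*π) :=
    (hf.mul Real.continuous_cos.continuousOn).intervalIntegrable_of_Icc hab
  have hfsi : IntervalIntegrable (fun t => f t * Real.sin t) volume 0 (2*π) :=
    (hf.mul Real.continuous_sin.continuousOn).intervalIntegrable_of_Icc hab
  have hc0 : 0 ≤ c := intervalIntegral.integral_nonneg hab (fun u hu => hpos u hu)
  rcases eq_or_lt_of_le hc0 with hc | hc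
  · right
    have ha0 : a = 0 := by
      have h1 : a ≤ c := by
        apply intervalIntegral.integral_mono_on hab hfci hfi
        intro x hx
        nlinarith [hpos x hx, Real.cos_le_one x, Real.neg_one_le_cos x]
      have h2 : (∫ t in (0:ℝ)..2*π, -f t) ≤ a := by
        apply intervalIntegral.integral_mono_on hab
          ((hf.fun_neg).intervalIntegrable_of_Icc hab) hfci
        intro x hx
        nlinarith [mul_le_mul_of_nonneg_left (Real.neg_one_le_cos x) (hpos x hx)]
      rw [intervalIntegral.integral_neg] at h2
      linarith
    have hb0 : b = 0 := by
      have h1 : b ≤ c := by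
        apply intervalIntegral.integral_mono_on hab hfsi hfi
        intro x hx
        nlinarith [hpos x hx, Real.sin_le_one x, Real.neg_one_le_sin x]
      have h2 : (∫ t in (0:ℝ)..2*π, -f t) ≤ b := by
        apply intervalIntegral.integral_mono_on hab
          ((hf.fun_neg).intervalIntegrable_of_Icc hab) hfsi
        intro x hx
        nlinarith [mul_le_mul_of_nonneg_left (Real.neg_one_le_sin x) (hpos x hx)]
      rw [intervalIntegral.integral_neg] at h2
      linarith
    funext s
    rw [expand f hf s, ← hadef, ← hbdef, ← hcdef, ha0, hb0, ← hc]
    ring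
  · left
    refine ⟨a, b, c, ?_, by funext s; rw [expand f hf s, ← hadef, ← hbdef, ← hcdef]; ring⟩
    set ρ := Real.sqrt (a^2+b^2) with hρdef
    set z : ℂ := ⟨a, b⟩ with hz
    have habs : ‖z‖ = ρ := by
      rw [Complex.norm_def, hρdef]
      congr 1
      simp [Complex.normSq_mk, hz]
      ring
    set θ := Complex.arg z with hθ
    have ha : ρ * Real.cos θ = a := by rw [← habs]; exact Complex.norm_mul_cos_arg z
    have hb : ρ * Real.sin θ = b := by rw [← habs]; exact Complex.norm_mul_sin_arg z
    have hρint : Real.cos θ * a + Real.sin θ * b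
        = ∫ t in (0:ℝ)..2*π, f t * Real.cos (θ - t) := by
      rw [hadef, hbdef, ← intervalIntegral.integral_const_mul,
        ← intervalIntegral.integral_const_mul,
        ← intervalIntegral.integral_add
          ((continuousOn_const.fun_mul (hf.fun_mul Real.continuous_cos.continuousOn)).intervalIntegrable_of_Icc hab)
          ((continuousOn_const.fun_mul (hf.fun_mul Real.continuous_sin.continuousOn)).intervalIntegrable_of_Icc hab)]
      apply intervalIntegral.integral_congr
      intro t _
      simp only [Real.cos_sub]
      ring
    -- find a point where f > 0 and cos(θ - t) < 1
    have hex : ∃ t₀ ∈ Icc (0:ℝ) (2*π), 0 < f t₀ := by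
      by_contra hcon
      push_neg at hcon
      have hzero : EqOn f 0 (uIcc (0:ℝ) (2*π)) := by
        intro t ht
        rw [uIcc_of_le hab] at ht
        exact le_antisymm (hcon t ht) (hpos t ht)
      have : c = 0 := by rw [hcdef, intervalIntegral.integral_congr hzero]; simp
      linarith
    obtain ⟨t₀, ht₀, hft₀⟩ := hex
    have hev : f ⁻¹' (Ioi 0) ∈ nhdsWithin t₀ (Icc (0:ℝ) (2*π)) := (hf t₀ ht₀) (Ioi_mem_nhds hft₀)
    rw [Metric.mem_nhdsWithin_iff] at hev
    obtain ⟨δ, hδ, hball⟩ := hev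
    have hwit : ∃ t₁ ∈ Icc (0:ℝ) (2*π), f t₁ * Real.cos (θ - t₁) < f t₁ := by
      rcases lt_or_eq_of_le (Real.cos_le_one (θ - t₀)) with hlt1 | heq1
      · exact ⟨t₀, ht₀, by nlinarith⟩
      · obtain ⟨k, hk⟩ := (Real.cos_eq_one_iff _).mp heq1
        set η := min (δ/2) π with hη
        have hη0 : 0 < η := lt_min (by linarith) Real.pi_pos
        have hηπ : η ≤ π := min_le_right _ _
        have hηδ : η < δ := lt_of_le_of_lt (min_le_left _ _) (by linarith)
        have hcosη : Real.cos η < 1 := by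
          have h5 := Real.cos_lt_cos_of_nonneg_of_le_pi le_rfl hηπ hη0
          rwa [Real.cos_zero] at h5
        by_cases hside : t₀ ≤ π
        · have hmemIcc : t₀ + η ∈ Icc (0:ℝ) (2*π) :=
            ⟨by linarith [ht₀.1], by linarith [Real.pi_pos]⟩
          have hmem : t₀ + η ∈ Metric.ball t₀ δ ∩ Icc (0:ℝ) (2*π) := by
            refine ⟨?_, hmemIcc⟩
            rw [Metric.mem_ball, Real.dist_eq]
            rw [show t₀ + η - t₀ = η by ring, abs_of_pos hη0]
            exact hηδ
          have hfpos : 0 < f (t₀ + η) := hball hmem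
          have hcos : Real.cos (θ - (t₀ + η)) = Real.cos η := by
            rw [show θ - (t₀ + η) = (k:ℝ)*(2*π) - η by rw [hk]; ring]
            rw [Real.cos_sub, Real.cos_int_mul_two_pi,
              show ((k:ℝ)*(2*π)) = ((2*k:ℤ):ℝ)*π by push_cast; ring, Real.sin_int_mul_pi]
            ring
          exact ⟨t₀ + η, hmemIcc, by rw [hcos]; nlinarith⟩
        · push_neg at hside
          have hmemIcc : t₀ - η ∈ Icc (0:ℝ) (2*π) :=
            ⟨by linarith, by linarith [ht₀.2]⟩
          have hmem : t₀ - η ∈ Metric.ball t₀ δ ∩ Icc (0:ℝ) (2*π) := by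
            refine ⟨?_, hmemIcc⟩
            rw [Metric.mem_ball, Real.dist_eq]
            rw [show t₀ - η - t₀ = -η by ring, abs_neg, abs_of_pos hη0]
            exact hηδ
          have hfpos : 0 < f (t₀ - η) := hball hmem
          have hcos : Real.cos (θ - (t₀ - η)) = Real.cos η := by
            rw [show θ - (t₀ - η) = (k:ℝ)*(2*π) + η by rw [hk]; ring]
            rw [Real.cos_add, Real.cos_int_mul_two_pi,
              show ((k:ℝ)*(2*π)) = ((2*k:ℤ):ℝ)*π by push_cast; ring, Real.sin_int_mul_pi]
            ring
          exact ⟨t₀ - η, hmemIcc, by rw [hcos]; nlinarith⟩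
    have hstrict : (∫ t in (0:ℝ)..2*π, f t * Real.cos (θ - t)) < c := by
      rw [hcdef]
      apply intervalIntegral.integral_lt_integral_of_continuousOn_of_le_of_exists_lt hablt
        (hf.fun_mul (Continuous.continuousOn (by fun_prop))) hf
      · intro x hx
        have hx' : x ∈ Icc (0:ℝ) (2*π) := Ioc_subset_Icc_self hx
        nlinarith [hpos x hx', Real.cos_le_one (θ - x)]
      · exact hwit
    calc ρ = Real.cos θ * a + Real.sin θ * b := by
          linear_combination Real.cos θ * ha + Real.sin θ * hb - ρ * (Real.sin_sq_add_cos_sq θ)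
      _ = ∫ t in (0:ℝ)..2*π, f t * Real.cos (θ - t) := hρint
      _ < c := hstrict


theorem S_image_of_positive_cone :
    ({g : ℝ → ℝ | ∃ f : ℝ → ℝ, ContinuousOn f (Set.Icc (0 : ℝ) (2 * Real.pi)) ∧
          (∀ t ∈ Set.Icc (0 : ℝ) (2 * Real.pi), 0 ≤ f t) ∧
          g = fun s => ∫ t in (0 : ℝ)..(2 * Real.pi), f t * (1 + Real.cos (s - t))} =
        {g : ℝ → ℝ | ∃ a b c : ℝ, Real.sqrt (a ^ 2 + b ^ 2) < c ∧
          g = fun s => a * Real.cos s + b * Real.sin s + c} ∪ {0}) ∧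
    (∀ g ∈ {g : ℝ → ℝ | ∃ a b c : ℝ, Real.sqrt (a ^ 2 + b ^ 2) ≤ c ∧
          g = fun s => a * Real.cos s + b * Real.sin s + c},
      ∀ ε > (0 : ℝ),
        ∃ h ∈ {g : ℝ → ℝ | ∃ f : ℝ → ℝ,
            ContinuousOn f (Set.Icc (0 : ℝ) (2 * Real.pi)) ∧
            (∀ t ∈ Set.Icc (0 : ℝ) (2 * Real.pi), 0 ≤ f t) ∧
            g = fun s => ∫ t in (0 : ℝ)..(2 * Real.pi), f t * (1 + Real.cos (s - t))},
          ∀ s ∈ Set.Icc (0 : ℝ) (2 * Real.pi), |g s - h s| < ε) ∧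
    ({g : ℝ → ℝ | ∃ f : ℝ → ℝ, ContinuousOn f (Set.Icc (0 : ℝ) (2 * Real.pi)) ∧
          (∀ t ∈ Set.Icc (0 : ℝ) (2 * Real.pi), 0 ≤ f t) ∧
          g = fun s => ∫ t in (0 : ℝ)..(2 * Real.pi), f t * (1 + Real.cos (s - t))} ≠
        {g : ℝ → ℝ | ∃ a b c : ℝ, Real.sqrt (a ^ 2 + b ^ 2) ≤ c ∧
          g = fun s => a * Real.cos s + b * Real.sin s + c}) := by
  have hpart1 : ({g : ℝ → ℝ | ∃ f : ℝ → ℝ, ContinuousOn f (Set.Icc (0 : ℝ) (2 * Real.pi)) ∧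
          (∀ t ∈ Set.Icc (0 : ℝ) (2 * Real.pi), 0 ≤ f t) ∧
          g = fun s => ∫ t in (0 : ℝ)..(2 * Real.pi), f t * (1 + Real.cos (s - t))} =
        {g : ℝ → ℝ | ∃ a b c : ℝ, Real.sqrt (a ^ 2 + b ^ 2) < c ∧
          g = fun s => a * Real.cos s + b * Real.sin s + c} ∪ {0}) := by
    ext g
    constructor
    · rintro ⟨f, hfc, hfpos, rfl⟩
      rcases forward f hfc hfpos with ⟨a, b, c, hlt, heq⟩ | heq
      · exact Or.inl ⟨a, b, c, hlt, heq⟩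
      · right
        exact heq
    · rintro (⟨a, b, c, hlt, rfl⟩ | hg)
      · obtain ⟨f, h1, h2, h3⟩ := mem_image a b c hlt
        exact ⟨f, h1, h2, h3⟩
      · simp only [mem_singleton_iff] at hg
        refine ⟨fun _ => 0, continuousOn_const, fun t _ => le_rfl, ?_⟩
        rw [hg]
        funext s
        simp
  refine ⟨hpart1, ?_, ?_⟩
  · rintro g ⟨a, b, c, hle, rfl⟩ ε hε
    obtain ⟨f, h1, h2, h3⟩ := mem_image a b (c + ε/2) (lt_of_le_of_lt hle (by linarith))
    refine ⟨fun s => a * Real.cos s + b * Real.sin s + (c + ε/2), ⟨f, h1, h2, h3⟩, ?_⟩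
    intro s _
    rw [show (a * Real.cos s + b * Real.sin s + c)
        - (a * Real.cos s + b * Real.sin s + (c + ε/2)) = -(ε/2) by ring,
      abs_neg, abs_of_pos (by linarith)]
    linarith
  · intro heq
    have hg0 : (fun s => 1 * Real.cos s + 0 * Real.sin s + 1)
        ∈ {g : ℝ → ℝ | ∃ a b c : ℝ, Real.sqrt (a ^ 2 + b ^ 2) ≤ c ∧
          g = fun s => a * Real.cos s + b * Real.sin s + c} := by
      refine ⟨1, 0, 1, ?_, rfl⟩
      rw [show (1:ℝ)^2 + 0^2 = 1 by norm_num, Real.sqrt_one]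
    rw [← heq, hpart1] at hg0
    rcases hg0 with ⟨a, b, c, hlt, hfe⟩ | hg0
    · have h0 := congrFun hfe 0
      have h1 := congrFun hfe π
      have h2 := congrFun hfe (π/2)
      simp only [Real.cos_zero, Real.sin_zero, Real.cos_pi, Real.sin_pi,
        Real.cos_pi_div_two, Real.sin_pi_div_two] at h0 h1 h2
      have ha : a = 1 := by linarith
      have hb : b = 0 := by linarith
      have hc : c = 1 := by linarith
      rw [ha, hb, hc, show (1:ℝ)^2 + 0^2 = 1 by norm_num, Real.sqrt_one] at hlt
      exact lt_irrefl _ hlt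
    · simp only [mem_singleton_iff] at hg0
      have := congrFun hg0 0
      norm_num at this
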